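/- arXiv:0710.5360 — 2 statements merged into one kernel-verified Lean document; each statement's English description precedes it below -/
import Mathlib

section
/- For every positive integer p, Σ_{n=1}^{∞} H_n / n^{2p+1} = (1/2) · Σ_{j=2}^{2p} (-1)^j · ζ(j) · ζ(2p - j + 2), where H_n = Σ_{k=1}^n 1/k and ζ is the Riemann zeta function. (Georgiou–Philippou formula.) -/
/-- The n-th harmonic number `H_n = ∑_{k=1}^n 1/k`. -/
noncomputable def H (n : ℕ) : ℝ := ∑ k ∈ Finset.Icc 1 n, (1 : ℝ) / k

open Finset Filter

noncomputable def Z (k : ℕ) : ℝ := ∑' n : ℕ, 1 / ((n : ℝ) + 1) ^ k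

noncomputable def A (P : ℕ) (x : ℕ × ℕ) : ℝ :=
  1 / (((x.1:ℝ)+1) * ((x.2:ℝ)+1)^(2*P) * ((x.1:ℝ)+(x.2:ℝ)+2))

lemma summableF (k : ℕ) (hk : 2 ≤ k) : Summable (fun n : ℕ => 1 / ((n : ℝ) + 1) ^ k) := by
  have h1 : Summable (fun n : ℕ => 1 / (n : ℝ) ^ k) :=
    Real.summable_one_div_nat_pow.mpr (by omega)
  have h2 := (summable_nat_add_iff 1).mpr h1
  exact h2.congr fun n => by push_cast; ring

lemma zeta_eq (k : ℕ) (hk : 2 ≤ k) : riemannZeta k = ((Z k : ℝ) : ℂ) := by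
  rw [zeta_nat_eq_tsum_of_gt_one (by omega : 1 < k)]
  have hs : Summable (fun n : ℕ => 1 / (n : ℂ) ^ k) := by
    apply Summable.of_norm
    have := Real.summable_one_div_nat_pow.mpr (show 1 < k by omega)
    exact this.congr fun n => by
      simp [norm_div, norm_pow, Complex.norm_natCast]
  rw [Summable.tsum_eq_zero_add hs]
  have h0 : 1 / ((0 : ℕ) : ℂ) ^ k = 0 := by
    simp [zero_pow (by omega : k ≠ 0)]
  rw [h0, zero_add, Z, Complex.ofReal_tsum]
  apply tsum_congr
  intro n
  push_cast
  ring

lemma summable_prodF (j k : ℕ) (hj : 2 ≤ j) (hk : 2 ≤ k) :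
    Summable (fun x : ℕ × ℕ => 1 / (((x.1:ℝ)+1)^j * ((x.2:ℝ)+1)^k)) := by
  have := (summableF j hj).mul_of_nonneg (summableF k hk)
    (fun n => by positivity) (fun n => by positivity)
  exact this.congr fun x => by rw [div_mul_div_comm, one_mul]

lemma zmul (j k : ℕ) (hj : 2 ≤ j) (hk : 2 ≤ k) :
    Z j * Z k = ∑' x : ℕ × ℕ, 1 / (((x.1:ℝ)+1)^j * ((x.2:ℝ)+1)^k) := by
  rw [Z, Z, tsum_mul_tsum_of_summable_norm
    ((summableF j hj).congr fun n => (Real.norm_of_nonneg (by positivity)).symm)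
    ((summableF k hk).congr fun n => (Real.norm_of_nonneg (by positivity)).symm)]
  exact tsum_congr fun x => by rw [div_mul_div_comm, one_mul]

lemma summableA (P : ℕ) (hP : 0 < P) : Summable (A P) := by
  have hb := summable_prodF 2 (2*P) le_rfl (by omega : 2 ≤ 2*P)
  refine hb.of_nonneg_of_le (fun x => by unfold A; positivity) (fun x => ?_)
  unfold A
  apply one_div_le_one_div_of_le (by positivity)
  have h1 : ((x.1:ℝ)+1)^2 * ((x.2:ℝ)+1)^(2*P)
      = ((x.1:ℝ)+1) * ((x.2:ℝ)+1)^(2*P) * ((x.1:ℝ)+1) := by ring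
  rw [h1]
  have h2 : ((x.1:ℝ)+1) ≤ ((x.1:ℝ)+(x.2:ℝ)+2) := by
    have : (0:ℝ) ≤ (x.2:ℝ) := Nat.cast_nonneg _
    linarith
  have h3 : (0:ℝ) ≤ ((x.1:ℝ)+1) * ((x.2:ℝ)+1)^(2*P) := by positivity
  exact mul_le_mul_of_nonneg_left h2 h3

lemma summableA_swap (P : ℕ) (hP : 0 < P) : Summable (fun x : ℕ × ℕ => A P x.swap) :=
  (Equiv.prodComm ℕ ℕ).summable_iff.mpr (summableA P hP)

lemma tsum_swapA (P : ℕ) : ∑' x : ℕ × ℕ, A P x.swap = ∑' x : ℕ × ℕ, A P x :=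
  (Equiv.prodComm ℕ ℕ).tsum_eq (A P)

lemma H_eq (c : ℕ) : H c = ∑ m ∈ range c, 1 / ((m : ℝ) + 1) := by
  rw [H, ← Finset.Ico_add_one_right_eq_Icc, Finset.sum_Ico_eq_sum_range]
  exact Finset.sum_congr rfl fun i _ => by push_cast; ring_nf

lemma hasSum_tele (c : ℕ) :
    HasSum (fun m : ℕ => 1 / ((m : ℝ) + 1) - 1 / ((m : ℝ) + c + 1)) (H c) := by
  set f : ℕ → ℝ := fun m => 1 / ((m : ℝ) + 1) with hf
  have hnonneg : ∀ m : ℕ, 0 ≤ 1 / ((m : ℝ) + 1) - 1 / ((m : ℝ) + c + 1) := by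
    intro m
    have h1 : (0:ℝ) < (m : ℝ) + 1 := by positivity
    have h2 : ((m : ℝ) + 1) ≤ (m : ℝ) + c + 1 := by
      have : (0:ℝ) ≤ c := Nat.cast_nonneg c
      linarith
    have := one_div_le_one_div_of_le h1 h2
    linarith
  rw [hasSum_iff_tendsto_nat_of_nonneg hnonneg]
  have hpart : ∀ M : ℕ, ∑ m ∈ range M, (1 / ((m : ℝ) + 1) - 1 / ((m : ℝ) + c + 1))
      = H c - ∑ i ∈ range c, f (M + i) := by
    intro M
    have e1 : ∑ m ∈ range M, (1 / ((m : ℝ) + 1) - 1 / ((m : ℝ) + c + 1))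
        = ∑ m ∈ range M, f m - ∑ m ∈ range M, f (m + c) := by
      rw [← Finset.sum_sub_distrib]
      refine Finset.sum_congr rfl fun m _ => ?_
      simp only [hf]
      push_cast
      ring_nf
    have e2 : ∑ m ∈ range (c + M), f m = ∑ m ∈ range c, f m + ∑ m ∈ range M, f (c + m) :=
      Finset.sum_range_add f c M
    have e3 : ∑ m ∈ range (M + c), f m = ∑ m ∈ range M, f m + ∑ i ∈ range c, f (M + i) :=
      Finset.sum_range_add f M c
    have e4 : c + M = M + c := by omega
    rw [e1]
    have e5 : ∑ m ∈ range M, f (m + c) = ∑ m ∈ range M, f (c + m) :=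
      Finset.sum_congr rfl fun m _ => by rw [add_comm]
    rw [e5]
    have : ∑ m ∈ range M, f (c + m) = ∑ m ∈ range (c + M), f m - ∑ m ∈ range c, f m := by
      rw [e2]; ring
    rw [this, e4, e3, H_eq]
    ring
  simp only [hpart]
  have : Tendsto (fun M : ℕ => ∑ i ∈ range c, f (M + i)) atTop (nhds 0) := by
    have h0 : (0:ℝ) = ∑ i ∈ range c, (0:ℝ) := by simp
    rw [h0]
    apply tendsto_finset_sum
    intro i _
    have hb : Tendsto (fun M : ℕ => (M : ℝ) + ((i : ℝ) + 1)) atTop atTop :=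
      tendsto_atTop_add_const_right _ _ tendsto_natCast_atTop_atTop
    have : Tendsto (fun M : ℕ => ((M : ℝ) + ((i : ℝ) + 1))⁻¹) atTop (nhds 0) :=
      hb.inv_tendsto_atTop
    apply this.congr
    intro M
    simp only [hf]
    push_cast
    rw [one_div]
    ring_nf
  have := (tendsto_const_nhds (x := H c)).sub this
  simpa using this

lemma hasSum_row (P n : ℕ) (hP : 0 < P) :
    HasSum (fun m : ℕ => A P (m, n)) (H (n+1) / ((n:ℝ)+1)^(2*P+1)) := by
  have h := (hasSum_tele (n+1)).mul_left (1 / ((n:ℝ)+1)^(2*P+1))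
  have heq : (fun m : ℕ => 1 / ((n:ℝ)+1)^(2*P+1) *
        (1 / ((m:ℝ)+1) - 1 / ((m:ℝ) + ((n+1:ℕ):ℝ) + 1)))
      = fun m : ℕ => A P (m, n) := by
    funext m
    unfold A
    have hm : (0:ℝ) < (m:ℝ)+1 := by positivity
    have hn : (0:ℝ) < (n:ℝ)+1 := by positivity
    have hmn : (0:ℝ) < (m:ℝ)+(n:ℝ)+2 := by positivity
    push_cast
    rw [pow_succ]
    field_simp
    ring
  rw [heq, one_div_mul_eq_div] at h
  exact h

lemma lhs_eq (P : ℕ) (hP : 0 < P) :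
    (∑' n : ℕ, H (n+1) / ((n:ℝ)+1)^(2*P+1)) = ∑' x : ℕ × ℕ, A P x := by
  have h1 : (∑' n : ℕ, H (n+1) / ((n:ℝ)+1)^(2*P+1)) = ∑' (n : ℕ) (m : ℕ), A P (m, n) :=
    tsum_congr fun n => ((hasSum_row P n hP).tsum_eq).symm
  rw [h1]
  have hc : Summable (Function.uncurry (fun m n : ℕ => A P (m, n))) :=
    (summableA P hP).congr fun x => rfl
  rw [Summable.tsum_comm hc]
  exact (Summable.tsum_prod (summableA P hP)).symm

lemma key_alg (P : ℕ) (hP : 0 < P) (x y : ℝ) (hx : 0 < x) (hy : 0 < y) :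
    ∑ j ∈ Finset.Icc 2 (2*P), (-1:ℝ)^j * (1 / (x^j * y^(2*P - j + 2))) =
      1/(x*y^(2*P)*(x+y)) + 1/(y*x^(2*P)*(x+y)) := by
  have hx' := hx.ne'
  have hy' := hy.ne'
  have hxy : (0:ℝ) < x + y := by linarith
  have hodd : Odd (2*P - 1) := ⟨P - 1, by omega⟩
  have hgeom := geom_sum₂_mul (-x⁻¹) y⁻¹ (2*P - 1)
  rw [hodd.neg_pow] at hgeom
  have hG : (∑ i ∈ Finset.range (2*P-1), (-x⁻¹)^i * (y⁻¹)^(2*P-1-1-i)) * (x⁻¹ + y⁻¹)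
      = (x⁻¹)^(2*P-1) + (y⁻¹)^(2*P-1) := by linear_combination -hgeom
  have hL : ∑ j ∈ Finset.Icc 2 (2*P), (-1:ℝ)^j * (1 / (x^j * y^(2*P - j + 2)))
      = (x⁻¹)^2*(y⁻¹)^2 * ∑ i ∈ Finset.range (2*P-1), (-x⁻¹)^i * (y⁻¹)^(2*P-1-1-i) := by
    rw [← Finset.Ico_add_one_right_eq_Icc, Finset.sum_Ico_eq_sum_range, Finset.mul_sum]
    have h21 : 2*P + 1 - 2 = 2*P - 1 := by omega
    rw [h21]
    refine Finset.sum_congr rfl fun i hi => ?_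
    have hi' : i < 2*P - 1 := Finset.mem_range.mp hi
    have e1 : 2*P - (2+i) + 2 = (2*P - 1 - 1 - i) + 2 := by omega
    rw [e1]
    generalize (2*P - 1 - 1 - i) = k
    rw [neg_pow, pow_add, pow_add, neg_pow]
    simp only [inv_pow]
    field_simp
    have hxi : x^i * x⁻¹^i = 1 := by rw [← mul_pow, mul_inv_cancel₀ hx', one_pow]
    linear_combination (-(x^2*y^2*y^k*(-1)^i)) * hxi
  rw [hL]
  have huv : x⁻¹ + y⁻¹ ≠ 0 := by positivity
  apply mul_right_cancel₀ huv
  rw [mul_assoc, hG]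
  set n := 2*P - 1 with hn
  have h2P : 2*P = n + 1 := by omega
  rw [h2P]
  simp only [inv_pow]
  field_simp
  ring

lemma rhs_real (P : ℕ) (hP : 0 < P) :
    ∑ j ∈ Finset.Icc 2 (2*P), (-1:ℝ)^j * Z j * Z (2*P - j + 2)
      = 2 * ∑' x : ℕ × ℕ, A P x := by
  have hexp : ∀ j ∈ Finset.Icc 2 (2*P), 2 ≤ j ∧ 2 ≤ 2*P - j + 2 := by
    intro j hj
    have := Finset.mem_Icc.mp hj
    omega
  have step1 : ∀ j ∈ Finset.Icc 2 (2*P), (-1:ℝ)^j * Z j * Z (2*P - j + 2)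
      = ∑' x : ℕ × ℕ, (-1:ℝ)^j * (1 / (((x.1:ℝ)+1)^j * ((x.2:ℝ)+1)^(2*P - j + 2))) := by
    intro j hj
    obtain ⟨h1, h2⟩ := hexp j hj
    rw [mul_assoc, zmul j _ h1 h2, ← tsum_mul_left]
  rw [Finset.sum_congr rfl step1]
  rw [← Summable.tsum_finsetSum (fun j hj => ((summable_prodF j _ (hexp j hj).1 (hexp j hj).2).mul_left _))]
  have step2 : ∀ x : ℕ × ℕ,
      (∑ j ∈ Finset.Icc 2 (2*P), (-1:ℝ)^j * (1 / (((x.1:ℝ)+1)^j * ((x.2:ℝ)+1)^(2*P - j + 2))))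
      = A P x + A P x.swap := by
    intro x
    have := key_alg P hP ((x.1:ℝ)+1) ((x.2:ℝ)+1) (by positivity) (by positivity)
    rw [this]
    unfold A
    simp only [Prod.fst_swap, Prod.snd_swap]
    ring_nf
  rw [tsum_congr step2, Summable.tsum_add (summableA P hP) (summableA_swap P hP), tsum_swapA P]
  ring

theorem stmt_9 (p : ℕ) (hp : 0 < p) :
    ((∑' n : ℕ, H (n + 1) / ((n : ℝ) + 1) ^ (2 * p + 1) : ℝ) : ℂ) =
      (1 / 2) * ∑ j ∈ Finset.Icc 2 (2 * p),
        (-1 : ℂ) ^ j * riemannZeta j * riemannZeta (2 * p - j + 2) := by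
  have hz : ∀ j ∈ Finset.Icc 2 (2*p),
      (-1 : ℂ) ^ j * riemannZeta j * riemannZeta (2 * p - j + 2)
      = (((-1:ℝ)^j * Z j * Z (2*p - j + 2) : ℝ) : ℂ) := by
    intro j hj
    have hm := Finset.mem_Icc.mp hj
    have hcast : (2 * (p:ℂ) - (j:ℂ) + 2) = (((2*p - j + 2 : ℕ)):ℂ) := by
      push_cast [Nat.cast_sub hm.2]
      ring
    rw [zeta_eq j (by omega)]
    rw [show ((2:ℂ) * (p:ℕ) - (j:ℕ) + 2) = (((2*p - j + 2 : ℕ)):ℂ) from hcast]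
    rw [zeta_eq (2*p - j + 2) (by omega)]
    push_cast
    ring
  rw [Finset.sum_congr rfl hz, ← Complex.ofReal_sum, rhs_real p hp, lhs_eq p hp]
  push_cast
  ring
end

section
/- Σ_{n=1}^{∞} H_n² / n² = ∫₀¹ ∫₀¹ (log t)(log u) / (1 - (1-t)(1-u)) du dt, where H_n = Σ_{k=1}^n 1/k is the n-th harmonic number. -/
open MeasureTheory Real Finset intervalIntegral

lemma H_eq_range (n : ℕ) : H n = ∑ j ∈ Finset.range n, (1:ℝ)/(j+1) := by
  induction n with
  | zero => simp [H]
  | succ m ih =>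
    rw [H, Finset.sum_Icc_succ_top (by omega), ← H, ih, Finset.sum_range_succ]
    push_cast; ring

lemma H_nonneg (n : ℕ) : 0 ≤ H n := by
  rw [H_eq_range]; positivity

lemma H_le (n : ℕ) : H n ≤ n := by
  rw [H_eq_range]
  calc ∑ j ∈ Finset.range n, (1:ℝ)/(j+1) ≤ ∑ j ∈ Finset.range n, 1 := by
        apply Finset.sum_le_sum; intro j _
        rw [div_le_one (by positivity)]; push_cast; linarith [Nat.cast_nonneg (α := ℝ) j]
    _ = n := by simp

lemma H_le_log (n : ℕ) : H n ≤ 1 + Real.log n := by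
  have := harmonic_le_one_add_log n
  have hh : H n = (harmonic n : ℝ) := by
    rw [harmonic_eq_sum_Icc, H]; push_cast; simp [one_div]
  rw [hh]; exact_mod_cast this

lemma summable_main : Summable (fun n : ℕ => (H (n+1))^2 / ((n:ℝ)+1)^2) := by
  have hs : Summable (fun n : ℕ => 25 * (((n:ℝ)+1) ^ ((3:ℝ)/2))⁻¹) := by
    apply Summable.mul_left
    have := (Real.summable_nat_rpow_inv (p := (3:ℝ)/2)).mpr (by norm_num)
    have := (summable_nat_add_iff 1).mpr this
    simpa using this
  apply Summable.of_nonneg_of_le (fun n => by positivity) _ hs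
  intro n
  have h1 : (1:ℝ) ≤ (n:ℝ)+1 := by linarith [Nat.cast_nonneg (α := ℝ) n]
  have hlog : Real.log ((n:ℝ)+1) ≤ 4 * ((n:ℝ)+1) ^ ((1:ℝ)/4) := by
    have := Real.log_le_rpow_div (x := (n:ℝ)+1) (ε := (1:ℝ)/4) (by linarith) (by norm_num)
    linarith
  have hr1 : (1:ℝ) ≤ ((n:ℝ)+1) ^ ((1:ℝ)/4) := Real.one_le_rpow h1 (by norm_num)
  have hH : H (n+1) ≤ 5 * ((n:ℝ)+1) ^ ((1:ℝ)/4) := by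
    have := H_le_log (n+1)
    push_cast at this
    linarith
  have hsq : (H (n+1))^2 ≤ 25 * ((n:ℝ)+1) ^ ((1:ℝ)/2) := by
    have h0 : 0 ≤ H (n+1) := H_nonneg _
    have : (H (n+1))^2 ≤ (5 * ((n:ℝ)+1) ^ ((1:ℝ)/4))^2 := by
      apply pow_le_pow_left₀ h0 hH
    calc (H (n+1))^2 ≤ (5 * ((n:ℝ)+1) ^ ((1:ℝ)/4))^2 := this
      _ = 25 * (((n:ℝ)+1) ^ ((1:ℝ)/4))^2 := by ring
      _ = 25 * ((n:ℝ)+1) ^ ((1:ℝ)/2) := by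
          rw [← Real.rpow_natCast (((n:ℝ)+1) ^ ((1:ℝ)/4)) 2, ← Real.rpow_mul (by linarith)]
          norm_num
  rw [div_le_iff₀ (by positivity)]
  calc (H (n+1))^2 ≤ 25 * ((n:ℝ)+1) ^ ((1:ℝ)/2) := hsq
    _ = 25 * (((n:ℝ)+1) ^ ((3:ℝ)/2))⁻¹ * ((n:ℝ)+1)^2 := by
        rw [← Real.rpow_natCast ((n:ℝ)+1) 2, ← Real.rpow_neg_one (((n:ℝ)+1) ^ ((3:ℝ)/2)),
          ← Real.rpow_mul (by linarith), mul_assoc, ← Real.rpow_add (by linarith)]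
        norm_num

-- integrability of log on (0,1]
lemma integrableOn_log_Ioc : IntegrableOn Real.log (Set.Ioc 0 1) volume := by
  have hg : IntegrableOn (fun u : ℝ => 2 * u ^ (-(1:ℝ)/2)) (Set.Ioc 0 1) volume := by
    have := (intervalIntegrable_rpow' (a := 0) (b := 1)
      (r := -(1:ℝ)/2) (by norm_num))
    rw [intervalIntegrable_iff_integrableOn_Ioc_of_le (by norm_num)] at this
    exact this.const_mul 2
  apply Integrable.mono' hg
  · exact Real.measurable_log.aestronglyMeasurable
  · rw [ae_restrict_iff' measurableSet_Ioc]
    filter_upwards with u hu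
    obtain ⟨hu0, hu1⟩ := hu
    rw [Real.norm_eq_abs, abs_of_nonpos (Real.log_nonpos hu0.le hu1)]
    have h1 : -Real.log u = Real.log u⁻¹ := (Real.log_inv u).symm
    rw [h1]
    have := Real.log_le_rpow_div (x := u⁻¹) (ε := (1:ℝ)/2) (by positivity) (by norm_num)
    calc Real.log u⁻¹ ≤ (u⁻¹) ^ ((1:ℝ)/2) / (1/2) := this
      _ = 2 * u ^ (-(1:ℝ)/2) := by
          rw [← Real.rpow_neg_one u, ← Real.rpow_mul hu0.le]
          ring_nf

lemma integrableOn_logpow (n : ℕ) :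
    IntegrableOn (fun u : ℝ => Real.log u * (1-u)^n) (Set.Ioc 0 1) volume := by
  apply Integrable.mono' integrableOn_log_Ioc.norm
  · exact (Real.measurable_log.mul
      ((measurable_const.sub measurable_id).pow_const n)).aestronglyMeasurable
  · rw [ae_restrict_iff' measurableSet_Ioc]
    filter_upwards with u hu
    obtain ⟨hu0, hu1⟩ := hu
    rw [Real.norm_eq_abs, abs_mul]
    have h1 : |(1-u)^n| ≤ 1 := by
      rw [abs_pow]
      apply pow_le_one₀ (abs_nonneg _)
      rw [abs_of_nonneg (by linarith)]; linarith
    have h2 : (0:ℝ) ≤ |Real.log u| := abs_nonneg _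
    calc |Real.log u| * |(1-u)^n| ≤ |Real.log u| * 1 := by nlinarith
      _ = ‖Real.log u‖ := by simp [Real.norm_eq_abs]

lemma geom_id (x : ℝ) (m : ℕ) :
    x * (∑ j ∈ Finset.range m, (1-x)^j) = 1 - (1-x)^m := by
  have h := geom_sum_mul (1-x) m
  linear_combination -h

lemma key_integral (n : ℕ) :
    ∫ u in (0:ℝ)..1, Real.log u * (1-u)^n
      = -((∑ j ∈ Finset.range (n+1), (1:ℝ)/(j+1)) / (n+1)) := by
  set F : ℝ → ℝ := fun u => (1 - (1-u)^(n+1)) * Real.log u / (n+1)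
      - (∑ j ∈ Finset.range (n+1), (1 - (1-u)^(j+1)) / (j+1)) / (n+1) with hF
  have hcont : ContinuousOn F (Set.Icc 0 1) := by
    have heq : ∀ u : ℝ, F u = (u * Real.log u) * (∑ j ∈ Finset.range (n+1), (1-u)^j) / (n+1)
        - (∑ j ∈ Finset.range (n+1), (1 - (1-u)^(j+1)) / (j+1)) / (n+1) := by
      intro u
      rw [hF]
      simp only
      rw [← geom_id u (n+1)]
      ring
    rw [funext heq]
    apply Continuous.continuousOn
    have c1 : Continuous fun u : ℝ => ∑ j ∈ Finset.range (n+1), (1-u)^j :=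
      continuous_finset_sum _ (fun j _ => (continuous_const.sub continuous_id).pow j)
    have c2 : Continuous fun u : ℝ => ∑ j ∈ Finset.range (n+1), (1 - (1-u)^(j+1)) / ((j:ℝ)+1) :=
      continuous_finset_sum _ (fun j _ =>
        (continuous_const.sub ((continuous_const.sub continuous_id).pow (j+1))).div_const _)
    exact ((Real.continuous_mul_log.mul c1).div_const _).sub (c2.div_const _)
  have hderiv : ∀ x ∈ Set.Ioo (0:ℝ) 1, HasDerivAt F (Real.log x * (1-x)^n) x := by
    intro x hx
    have hx0 : x ≠ 0 := ne_of_gt hx.1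
    have hsub : HasDerivAt (fun u : ℝ => 1 - u) (-1) x := (hasDerivAt_id x).const_sub 1
    have h1 : HasDerivAt (fun u : ℝ => 1 - (1-u)^(n+1)) (((n:ℝ)+1) * (1-x)^n) x := by
      have hp := (hsub.fun_pow (n+1)).const_sub 1
      refine hp.congr_deriv (Eq.symm ?_)
      simp only [Nat.add_sub_cancel]
      push_cast; ring
    have h2 : HasDerivAt Real.log x⁻¹ x := Real.hasDerivAt_log hx0
    have hprod := (h1.mul h2).div_const ((n:ℝ)+1)
    have hsum : HasDerivAt (fun u : ℝ => ∑ j ∈ Finset.range (n+1), (1 - (1-u)^(j+1)) / ((j:ℝ)+1))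
        (∑ j ∈ Finset.range (n+1), (1-x)^j) x := by
      have : ∀ j ∈ Finset.range (n+1), HasDerivAt (fun u : ℝ => (1 - (1-u)^(j+1)) / ((j:ℝ)+1))
          ((1-x)^j) x := by
        intro j _
        have hp := ((hsub.fun_pow (j+1)).const_sub 1).div_const ((j:ℝ)+1)
        refine hp.congr_deriv (Eq.symm ?_)
        simp only [Nat.add_sub_cancel]
        have hj : ((j:ℝ)+1) ≠ 0 := by positivity
        push_cast
        field_simp
      exact HasDerivAt.fun_sum this
    have htot := hprod.sub (hsum.div_const ((n:ℝ)+1))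
    refine htot.congr_deriv (Eq.symm ?_)
    have hg := geom_id x (n+1)
    have hn1 : ((n:ℝ)+1) ≠ 0 := by positivity
    field_simp
    linear_combination hg
  have hInt : IntervalIntegrable (fun u : ℝ => Real.log u * (1-u)^n) volume 0 1 := by
    rw [intervalIntegrable_iff_integrableOn_Ioc_of_le (by norm_num)]
    exact integrableOn_logpow n
  rw [integral_eq_sub_of_hasDeriv_right_of_le (by norm_num) hcont
      (fun x hx => (hderiv x hx).hasDerivWithinAt) hInt]
  rw [hF]
  simp only
  norm_num [Real.log_zero, Real.log_one]

lemma key_integral' (n : ℕ) :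
    ∫ u in Set.Ioc (0:ℝ) 1, Real.log u * (1-u)^n = -(H (n+1) / ((n:ℝ)+1)) := by
  rw [← intervalIntegral.integral_of_le (by norm_num : (0:ℝ) ≤ 1), key_integral,
    H_eq_range (n+1)]

lemma key_norm (n : ℕ) :
    ∫ u in Set.Ioc (0:ℝ) 1, ‖Real.log u * (1-u)^n‖ = H (n+1) / ((n:ℝ)+1) := by
  have h : Set.EqOn (fun u : ℝ => ‖Real.log u * (1-u)^n‖)
      (fun u : ℝ => -(Real.log u * (1-u)^n)) (Set.Ioc 0 1) := by
    intro u hu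
    obtain ⟨h0, h1⟩ := hu
    simp only [Real.norm_eq_abs, abs_mul]
    rw [abs_of_nonpos (Real.log_nonpos h0.le h1), abs_of_nonneg (pow_nonneg (by linarith) n)]
    ring
  rw [setIntegral_congr_fun measurableSet_Ioc h, MeasureTheory.integral_neg, key_integral']
  ring

lemma aH_nonneg (n : ℕ) : 0 ≤ H (n+1) / ((n:ℝ)+1) := by
  apply div_nonneg (H_nonneg _)
  positivity

lemma aH_le_one (n : ℕ) : H (n+1) / ((n:ℝ)+1) ≤ 1 := by
  rw [div_le_one (by positivity)]
  have := H_le (n+1)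
  push_cast at this
  linarith

lemma inner_eq (t : ℝ) (ht : t ∈ Set.Ioc (0:ℝ) 1) :
    ∫ u in (0:ℝ)..1, Real.log t * Real.log u / (1 - (1 - t) * (1 - u))
      = ∑' n : ℕ, (-(H (n+1) / ((n:ℝ)+1))) * (Real.log t * (1-t)^n) := by
  obtain ⟨ht0, ht1⟩ := ht
  rw [intervalIntegral.integral_of_le (by norm_num : (0:ℝ) ≤ 1)]
  have hptwise : Set.EqOn (fun u : ℝ => Real.log t * Real.log u / (1 - (1 - t) * (1 - u)))
      (fun u : ℝ => ∑' n : ℕ, (Real.log t * (1-t)^n) * (Real.log u * (1-u)^n))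
      (Set.Ioc 0 1) := by
    intro u hu
    obtain ⟨hu0, hu1⟩ := hu
    have hr0 : 0 ≤ (1-t)*(1-u) := mul_nonneg (by linarith) (by linarith)
    have hr1 : (1-t)*(1-u) < 1 := by nlinarith
    have hg := tsum_geometric_of_lt_one hr0 hr1
    simp only
    calc Real.log t * Real.log u / (1 - (1-t)*(1-u))
        = (Real.log t * Real.log u) * (1 - (1-t)*(1-u))⁻¹ := by rw [div_eq_mul_inv]
      _ = (Real.log t * Real.log u) * ∑' n : ℕ, ((1-t)*(1-u))^n := by rw [hg]
      _ = ∑' n : ℕ, (Real.log t * Real.log u) * ((1-t)*(1-u))^n := tsum_mul_left.symm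
      _ = ∑' n : ℕ, (Real.log t * (1-t)^n) * (Real.log u * (1-u)^n) :=
          tsum_congr (fun n => by rw [mul_pow]; ring)
  rw [setIntegral_congr_fun measurableSet_Ioc hptwise]
  have hf : ∀ n : ℕ, Integrable
      (fun u : ℝ => (Real.log t * (1-t)^n) * (Real.log u * (1-u)^n))
      (volume.restrict (Set.Ioc 0 1)) :=
    fun n => (integrableOn_logpow n).const_mul _
  have hsum : Summable (fun n : ℕ => ∫ u in Set.Ioc (0:ℝ) 1,
      ‖(Real.log t * (1-t)^n) * (Real.log u * (1-u)^n)‖) := by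
    have heq : ∀ n : ℕ, (∫ u in Set.Ioc (0:ℝ) 1,
        ‖(Real.log t * (1-t)^n) * (Real.log u * (1-u)^n)‖)
        = ‖Real.log t * (1-t)^n‖ * (H (n+1) / ((n:ℝ)+1)) := by
      intro n
      simp only [norm_mul (Real.log t * (1 - t) ^ n)]
      rw [MeasureTheory.integral_const_mul, key_norm]
    rw [funext heq]
    have hgeo : Summable (fun n : ℕ => ‖Real.log t‖ * (1-t)^n) :=
      (summable_geometric_of_lt_one (r := 1-t) (by linarith) (by linarith)).mul_left _
    apply Summable.of_nonneg_of_le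
      (fun n => mul_nonneg (norm_nonneg _) (aH_nonneg n)) (fun n => ?_) hgeo
    have h1 : ‖Real.log t * (1-t)^n‖ = ‖Real.log t‖ * (1-t)^n := by
      rw [norm_mul, Real.norm_eq_abs ((1-t)^n), abs_of_nonneg (pow_nonneg (by linarith) n)]
    rw [h1]
    calc ‖Real.log t‖ * (1-t)^n * (H (n+1) / ((n:ℝ)+1))
        ≤ ‖Real.log t‖ * (1-t)^n * 1 :=
          mul_le_mul_of_nonneg_left (aH_le_one n) (mul_nonneg (norm_nonneg _) (pow_nonneg (by linarith) n))
      _ = ‖Real.log t‖ * (1-t)^n := mul_one _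
  rw [← MeasureTheory.integral_tsum_of_summable_integral_norm hf hsum]
  apply tsum_congr
  intro n
  rw [MeasureTheory.integral_const_mul, key_integral']
  ring

theorem stmt_12 :
    ∑' n : ℕ, (H (n + 1)) ^ 2 / ((n : ℝ) + 1) ^ 2 =
      ∫ t in (0:ℝ)..1, ∫ u in (0:ℝ)..1,
        Real.log t * Real.log u / (1 - (1 - t) * (1 - u)) := by
  rw [intervalIntegral.integral_of_le (by norm_num : (0:ℝ) ≤ 1)]
  have h : Set.EqOn
      (fun t : ℝ => ∫ u in (0:ℝ)..1, Real.log t * Real.log u / (1 - (1 - t) * (1 - u)))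
      (fun t : ℝ => ∑' n : ℕ, (-(H (n+1) / ((n:ℝ)+1))) * (Real.log t * (1-t)^n))
      (Set.Ioc 0 1) := fun t ht => inner_eq t ht
  rw [setIntegral_congr_fun measurableSet_Ioc h]
  have hf : ∀ n : ℕ, Integrable
      (fun t : ℝ => (-(H (n+1) / ((n:ℝ)+1))) * (Real.log t * (1-t)^n))
      (volume.restrict (Set.Ioc 0 1)) := fun n => (integrableOn_logpow n).const_mul _
  have hsum : Summable (fun n : ℕ => ∫ t in Set.Ioc (0:ℝ) 1,
      ‖(-(H (n+1) / ((n:ℝ)+1))) * (Real.log t * (1-t)^n)‖) := by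
    have heq : ∀ n : ℕ, (∫ t in Set.Ioc (0:ℝ) 1,
        ‖(-(H (n+1) / ((n:ℝ)+1))) * (Real.log t * (1-t)^n)‖)
        = (H (n+1) / ((n:ℝ)+1)) * (H (n+1) / ((n:ℝ)+1)) := by
      intro n
      simp only [norm_mul (-(H (n+1) / ((n:ℝ)+1)))]
      rw [MeasureTheory.integral_const_mul, key_norm, norm_neg, Real.norm_eq_abs,
        abs_of_nonneg (aH_nonneg n)]
    rw [funext heq]
    exact summable_main.congr (fun n => by rw [pow_two, pow_two, div_mul_div_comm])
  rw [← MeasureTheory.integral_tsum_of_summable_integral_norm hf hsum]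
  apply tsum_congr
  intro n
  rw [MeasureTheory.integral_const_mul, key_integral', neg_mul_neg, pow_two, pow_two,
    div_mul_div_comm]
end
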